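/- Let H be a normal subgroup of SL₂(ℤ) which is a congruence subgroup of level m. Then m equals the order of the coset 𝔱H in the quotient group SL₂(ℤ)/H, where 𝔱 = [[1,1],[0,1]]. -/

import Mathlib

open Matrix

/-- The principal congruence subgroup `Γ(n)`, the kernel of reduction mod `n`. -/
def GammaSL (n : ℕ) : Subgroup (SpecialLinearGroup (Fin 2) ℤ) :=
  (SpecialLinearGroup.map (Int.castRingHom (ZMod n))).ker

/-- `L` is a congruence subgroup of level `n`: `n` is the least positive integer with
`Γ(n) ≤ L`. -/
def IsCongruenceLevel (L : Subgroup (SpecialLinearGroup (Fin 2) ℤ)) (n : ℕ) : Prop :=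
  0 < n ∧ GammaSL n ≤ L ∧ ∀ m : ℕ, 0 < m → GammaSL m ≤ L → n ≤ m

open MatrixGroups

def elL (x : ℤ) : SL(2, ℤ) := ⟨!![1, x; 0, 1], by simp [Matrix.det_fin_two_of]⟩
def elU (x : ℤ) : SL(2, ℤ) := ⟨!![1, 0; x, 1], by simp [Matrix.det_fin_two_of]⟩

lemma elL_eq_T_zpow (x : ℤ) : elL x = ModularGroup.T ^ x :=
  Subtype.ext (ModularGroup.coe_T_zpow x).symm

lemma elL_mul (x y : ℤ) : elL x * elL y = elL (x + y) := by
  rw [elL_eq_T_zpow, elL_eq_T_zpow, elL_eq_T_zpow, ← _root_.zpow_add]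

lemma elU_mul (x y : ℤ) : elU x * elU y = elU (x + y) := by
  apply Subtype.ext
  erw [Matrix.SpecialLinearGroup.coe_mul]
  simp only [Matrix.SpecialLinearGroup.coe_mul, elU, Matrix.mul_fin_two]
  norm_num

lemma elU_eq (x : ℤ) : elU x = ModularGroup.S * ModularGroup.T ^ (-x) * ModularGroup.S⁻¹ := by
  rw [eq_mul_inv_iff_mul_eq]
  apply Subtype.ext
  erw [Matrix.SpecialLinearGroup.coe_mul, Matrix.SpecialLinearGroup.coe_mul]
  simp only [Matrix.SpecialLinearGroup.coe_mul, elU, ModularGroup.coe_S, ModularGroup.coe_T_zpow,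
    Matrix.mul_fin_two]
  norm_num

lemma exists_isCoprime_add_mul :
    ∀ n : ℕ, ∀ a b : ℤ, IsCoprime a b → 0 < n → ∃ s : ℤ, IsCoprime (a + b * s) (n : ℤ) := by
  intro n
  induction n using Nat.recOnPosPrimePosCoprime with
  | prime_pow p k hpp hk =>
    intro a b hab _
    have hpZ : Prime (p : ℤ) := Nat.prime_iff_prime_int.mp hpp
    by_cases hdvd : (p : ℤ) ∣ a
    · refine ⟨1, ?_⟩
      have hpb : ¬ (p : ℤ) ∣ b := fun hb => hpZ.not_unit (hab.isUnit_of_dvd' hdvd hb)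
      have : ¬ (p : ℤ) ∣ (a + b * 1) := by
        rw [mul_one]
        intro h
        exact hpb ((dvd_add_right hdvd).mp h)
      have h1 : IsCoprime ((p:ℤ) ^ k) (a + b * 1) := ((hpZ.coprime_iff_not_dvd).mpr this).pow_left
      push_cast
      exact h1.symm
    · refine ⟨0, ?_⟩
      have h1 : IsCoprime ((p:ℤ) ^ k) (a + b * 0) := by
        rw [mul_zero, add_zero]
        exact ((hpZ.coprime_iff_not_dvd).mpr hdvd).pow_left
      push_cast
      exact h1.symm
  | zero => intro a b _ h; simp at h
  | one => intro a b _ _; exact ⟨0, by push_cast; exact isCoprime_one_right⟩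
  | coprime u v hu hv huv Pu Pv =>
    intro a b hab _
    obtain ⟨s₁, h₁⟩ := Pu a b hab (by omega)
    obtain ⟨s₂, h₂⟩ := Pv a b hab (by omega)
    have hcop : IsCoprime (u : ℤ) (v : ℤ) := Nat.isCoprime_iff_coprime.mpr huv
    obtain ⟨p, q, hpq⟩ := hcop
    refine ⟨s₂ * u * p + s₁ * v * q, ?_⟩
    have e1 : a + b * (s₂ * u * p + s₁ * v * q)
        = (a + b * s₁) + (b * p * (s₂ - s₁)) * u := by linear_combination b * s₁ * hpq
    have e2 : a + b * (s₂ * u * p + s₁ * v * q)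
        = (a + b * s₂) + (b * q * (s₁ - s₂)) * v := by linear_combination b * s₂ * hpq
    push_cast
    refine IsCoprime.mul_right ?_ ?_
    · rw [e1]; exact h₁.add_mul_right_left _
    · rw [e2]; exact h₂.add_mul_right_left _

lemma gammaSL_le_of_T_pow_mem (H : Subgroup (SpecialLinearGroup (Fin 2) ℤ)) [hN : H.Normal]
    (m d : ℕ) (hm : 0 < m) (hΓ : GammaSL m ≤ H) (hTd : ModularGroup.T ^ (d : ℤ) ∈ H) :
    GammaSL d ≤ H := by
  -- elementary matrices with parameter divisible by d are in H
  have hLH : ∀ y : ℤ, (d : ℤ) ∣ y → elL y ∈ H := by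
    rintro y ⟨k, rfl⟩
    rw [elL_eq_T_zpow, _root_.zpow_mul]
    exact Subgroup.zpow_mem H hTd k
  have hUH : ∀ y : ℤ, (d : ℤ) ∣ y → elU y ∈ H := by
    intro y hy
    rw [elU_eq]
    exact hN.conj_mem _ (by rw [← elL_eq_T_zpow]; exact hLH _ (dvd_neg.mpr hy)) _
  intro A hA
  have hA' : A ∈ CongruenceSubgroup.Gamma d := hA
  rw [CongruenceSubgroup.Gamma_mem] at hA'
  obtain ⟨h00, h01, h10, h11⟩ := hA'
  set a : ℤ := A 0 0 with ha_def
  set b : ℤ := A 0 1 with hb_def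
  set c : ℤ := A 1 0 with hc_def
  set e : ℤ := A 1 1 with he_def
  have hAval : (A : Matrix (Fin 2) (Fin 2) ℤ) = !![a, b; c, e] := by
    ext i j; fin_cases i <;> fin_cases j <;> rfl
  have hdet : a * e - b * c = 1 := by
    have := A.property
    rw [Matrix.det_fin_two] at this
    exact this
  have hda : (d : ℤ) ∣ a - 1 := by
    rw [← ZMod.intCast_zmod_eq_zero_iff_dvd]
    push_cast
    rw [h00]; ring
  have hdb : (d : ℤ) ∣ b := by
    rw [← ZMod.intCast_zmod_eq_zero_iff_dvd]; exact_mod_cast h01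
  have hdc : (d : ℤ) ∣ c := by
    rw [← ZMod.intCast_zmod_eq_zero_iff_dvd]; exact_mod_cast h10
  have hde : (d : ℤ) ∣ e - 1 := by
    rw [← ZMod.intCast_zmod_eq_zero_iff_dvd]
    push_cast
    rw [h11]; ring
  -- choose s with a + d*c*s coprime to m
  have hcop_ac : IsCoprime a c := ⟨e, -b, by linear_combination hdet⟩
  have hcop_ad : IsCoprime a (d : ℤ) := by
    obtain ⟨k, hk⟩ := hda
    exact ⟨1, -k, by linear_combination hk⟩
  obtain ⟨s, hs⟩ := exists_isCoprime_add_mul m a ((d : ℤ) * c) (hcop_ad.mul_right hcop_ac) hm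
  obtain ⟨x, y, hxy⟩ := hs
  obtain ⟨c₀, hc₀⟩ := hdc
  set a1 : ℤ := a + d * s * c with ha1_def
  set b1 : ℤ := b + d * s * e with hb1_def
  have hdb1 : (d : ℤ) ∣ b1 := by
    rw [hb1_def]
    exact dvd_add hdb ⟨s * e, by ring⟩
  obtain ⟨b₀, hb₀⟩ := hdb1
  obtain ⟨t, ht⟩ := ZMod.intCast_surjective (n := m) (-(c₀ : ZMod m) * (x : ZMod m))
  set v : ℤ := e + d * t * b1 with hv_def
  obtain ⟨s', hs'⟩ := ZMod.intCast_surjective (n := m) (-(b₀ : ZMod m) * (a1 : ZMod m))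
  -- the key scalar facts mod m
  have hm0 : ((m : ℤ) : ZMod m) = 0 := by push_cast; exact ZMod.natCast_self m
  have ru : (x : ZMod m) * ((a : ZMod m) + (d : ZMod m) * (s : ZMod m) * (c : ZMod m)) = 1 := by
    have := congrArg (fun z : ℤ => (z : ZMod m)) hxy
    push_cast at this
    rw [ZMod.natCast_self] at this
    linear_combination this
  have rc : (c : ZMod m) = (d : ZMod m) * (c₀ : ZMod m) := by exact_mod_cast congrArg _ hc₀
  have rdet : (a : ZMod m) * (e : ZMod m) - (b : ZMod m) * (c : ZMod m) = 1 := by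
    exact_mod_cast congrArg (fun z : ℤ => (z : ZMod m)) hdet
  have rb1 : (b : ZMod m) + (d : ZMod m) * (s : ZMod m) * (e : ZMod m)
      = (d : ZMod m) * (b₀ : ZMod m) := by exact_mod_cast congrArg (fun z : ℤ => (z : ZMod m)) hb₀
  have f1 : (c : ZMod m) + (d : ZMod m) * (t : ZMod m)
      * ((a : ZMod m) + (d : ZMod m) * (s : ZMod m) * (c : ZMod m)) = 0 := by
    rw [ht]
    linear_combination rc - ((d : ZMod m) * (c₀ : ZMod m)) * ru
  have f2 : ((a : ZMod m) + (d : ZMod m) * (s : ZMod m) * (c : ZMod m))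
      * ((e : ZMod m) + (d : ZMod m) * (t : ZMod m)
        * ((b : ZMod m) + (d : ZMod m) * (s : ZMod m) * (e : ZMod m))) = 1 := by
    linear_combination rdet + ((b : ZMod m) + (d : ZMod m) * (s : ZMod m) * (e : ZMod m)) * f1
  have f3 : ((b : ZMod m) + (d : ZMod m) * (s : ZMod m) * (e : ZMod m))
      + (d : ZMod m) * (s' : ZMod m) * ((e : ZMod m) + (d : ZMod m) * (t : ZMod m)
        * ((b : ZMod m) + (d : ZMod m) * (s : ZMod m) * (e : ZMod m))) = 0 := by
    rw [hs']
    have ha1c : ((a1 : ℤ) : ZMod m)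
        = (a : ZMod m) + (d : ZMod m) * (s : ZMod m) * (c : ZMod m) := by
      rw [ha1_def]; push_cast; ring
    rw [ha1c]
    linear_combination rb1 - ((d : ZMod m) * (b₀ : ZMod m)) * f2
  -- the two sides
  set X : SpecialLinearGroup (Fin 2) ℤ := elL (d * s') * (elU (d * t) * (elL (d * s) * A))
    with hX_def
  set P : SpecialLinearGroup (Fin 2) ℤ :=
    elL a1 * (elU (-v) * (elL a1 * (elL (-1) * (elU 1 * elL (-1))))) with hP_def
  have hφ : SpecialLinearGroup.map (Int.castRingHom (ZMod m)) X
      = SpecialLinearGroup.map (Int.castRingHom (ZMod m)) P := by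
    have hmapL : ∀ z : ℤ, ((SpecialLinearGroup.map (Int.castRingHom (ZMod m)) (elL z))
        : Matrix (Fin 2) (Fin 2) (ZMod m)) = !![1, (z : ZMod m); 0, 1] := by
      intro z
      rw [SpecialLinearGroup.map_apply_coe]
      ext i j
      fin_cases i <;> fin_cases j <;> simp [elL]
    have hmapU : ∀ z : ℤ, ((SpecialLinearGroup.map (Int.castRingHom (ZMod m)) (elU z))
        : Matrix (Fin 2) (Fin 2) (ZMod m)) = !![1, 0; (z : ZMod m), 1] := by
      intro z
      rw [SpecialLinearGroup.map_apply_coe]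
      ext i j
      fin_cases i <;> fin_cases j <;> simp [elU]
    have hmapA : ((SpecialLinearGroup.map (Int.castRingHom (ZMod m)) A)
        : Matrix (Fin 2) (Fin 2) (ZMod m))
        = !![(a : ZMod m), (b : ZMod m); (c : ZMod m), (e : ZMod m)] := by
      rw [SpecialLinearGroup.map_apply_coe]
      ext i j
      rw [RingHom.mapMatrix_apply, hAval]
      fin_cases i <;> fin_cases j <;> simp
    have ha1c : ((a1 : ℤ) : ZMod m) = (a : ZMod m) + (d : ZMod m) * (s : ZMod m) * (c : ZMod m) := by
      rw [ha1_def]; push_cast; ring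
    have hvc : ((v : ℤ) : ZMod m) = (e : ZMod m) + (d : ZMod m) * (t : ZMod m)
        * ((b : ZMod m) + (d : ZMod m) * (s : ZMod m) * (e : ZMod m)) := by
      rw [hv_def, hb1_def]; push_cast; ring
    apply Matrix.SpecialLinearGroup.ext
    intro i j
    simp only [hX_def, hP_def, _root_.map_mul, Matrix.SpecialLinearGroup.coe_mul, hmapL, hmapU, hmapA,
      Matrix.mul_fin_two]
    fin_cases i <;> fin_cases j <;>
        simp only [Fin.zero_eta, Fin.mk_one, Matrix.cons_val', Matrix.cons_val_zero,
          Matrix.cons_val_one, Matrix.head_cons, Matrix.head_fin_const, Matrix.empty_val',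
          Matrix.cons_val_fin_one, Matrix.of_apply] <;>
        push_cast [ha1c, hvc]
    · linear_combination ((d : ZMod m) * (s' : ZMod m)) * f1
        + ((a : ZMod m) + (d : ZMod m) * (s : ZMod m) * (c : ZMod m)) * f2
    · linear_combination f3 - f2
    · linear_combination f1 + f2
    · ring
  -- P lies in H, via the quotient group
  have hL0 : elL 0 = 1 := Subtype.ext (by simp [elL, Matrix.one_fin_two])
  have hU0 : elU 0 = 1 := Subtype.ext (by simp [elU, Matrix.one_fin_two])
  have hLinv : elL (-1) = (elL 1)⁻¹ :=
    eq_inv_of_mul_eq_one_left (by rw [elL_mul]; norm_num [hL0])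
  have hUinv : elU (-1) = (elU 1)⁻¹ :=
    eq_inv_of_mul_eq_one_left (by rw [elU_mul]; norm_num [hU0])
  have hda1 : (d : ℤ) ∣ a1 - 1 := by
    have h' : a1 - 1 = (a - 1) + (d : ℤ) * (s * c) := by rw [ha1_def]; ring
    rw [h']
    exact dvd_add hda ⟨_, rfl⟩
  have hdv : (d : ℤ) ∣ 1 - v := by
    have h' : 1 - v = -((e - 1) + (d : ℤ) * (t * b1)) := by rw [hv_def]; ring
    rw [h']
    exact dvd_neg.mpr (dvd_add hde ⟨_, rfl⟩)
  have q1 : ∀ g ∈ H, (QuotientGroup.mk g : _ ⧸ H) = 1 :=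
    fun g hg => (QuotientGroup.eq_one_iff g).mpr hg
  have hPH : P ∈ H := by
    rw [← QuotientGroup.eq_one_iff]
    have d1 : elL a1 = elL 1 * elL (a1 - 1) := by rw [elL_mul]; congr 1; ring
    have d2 : elU (-v) = elU (-1) * elU (1 - v) := by rw [elU_mul]; congr 1; ring
    rw [hP_def, d1, d2]
    simp only [QuotientGroup.mk_mul, q1 _ (hLH _ hda1), q1 _ (hUH _ hdv), mul_one, one_mul]
    rw [hLinv, hUinv]
    simp only [QuotientGroup.mk_inv]
    group
  -- conclude
  have hker : P⁻¹ * X ∈ GammaSL m := by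
    have h1 : SpecialLinearGroup.map (Int.castRingHom (ZMod m)) (P⁻¹ * X) = 1 := by
      rw [_root_.map_mul, map_inv, hφ, inv_mul_cancel]
    exact h1
  have hXH : X ∈ H := by
    have h2 := H.mul_mem hPH (hΓ hker)
    rwa [mul_inv_cancel_left] at h2
  have hback : A = (elL ((d : ℤ) * s))⁻¹ * ((elU ((d : ℤ) * t))⁻¹ * ((elL ((d : ℤ) * s'))⁻¹ * X)) := by
    rw [hX_def]; group
  rw [hback]
  exact H.mul_mem (H.inv_mem (hLH _ ⟨s, rfl⟩))
    (H.mul_mem (H.inv_mem (hUH _ ⟨t, rfl⟩)) (H.mul_mem (H.inv_mem (hLH _ ⟨s', rfl⟩)) hXH))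

/-- If `H` is a normal congruence subgroup of `SL₂(ℤ)` of level `m`, then `m` is the
order of the coset `𝔱H` in `SL₂(ℤ)/H`. -/
theorem level_eq_orderOf_t (H : Subgroup (SpecialLinearGroup (Fin 2) ℤ)) [H.Normal]
    (m : ℕ) (hH : IsCongruenceLevel H m) :
    m = orderOf (QuotientGroup.mk ModularGroup.T : SpecialLinearGroup (Fin 2) ℤ ⧸ H) := by
  obtain ⟨hm, hΓm, hmin⟩ := hH
  set d := orderOf (QuotientGroup.mk ModularGroup.T : SpecialLinearGroup (Fin 2) ℤ ⧸ H) with hd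
  have hTm : ModularGroup.T ^ m ∈ GammaSL m := by
    have h1 := CongruenceSubgroup.ModularGroup_T_pow_mem_Gamma (m : ℤ) (m : ℤ) dvd_rfl
    rw [Int.natAbs_natCast] at h1
    rw [← zpow_natCast ModularGroup.T m]
    exact h1
  have hpow : (QuotientGroup.mk ModularGroup.T : SpecialLinearGroup (Fin 2) ℤ ⧸ H) ^ m = 1 := by
    have h1 : ((QuotientGroup.mk' H) (ModularGroup.T ^ m)) = 1 :=
      (QuotientGroup.eq_one_iff _).mpr (hΓm hTm)
    simpa [map_pow] using h1
  have hdm : d ∣ m := orderOf_dvd_of_pow_eq_one hpow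
  have hd0 : 0 < d := by
    rcases Nat.eq_zero_or_pos d with h | h
    · rw [h] at hdm
      omega
    · exact h
  have hTd : ModularGroup.T ^ (d : ℤ) ∈ H := by
    have h1 : ((QuotientGroup.mk' H) (ModularGroup.T ^ d)) = 1 := by
      rw [map_pow]
      exact pow_orderOf_eq_one _
    rw [zpow_natCast]
    exact (QuotientGroup.eq_one_iff _).mp h1
  exact le_antisymm (hmin d hd0 (gammaSL_le_of_T_pow_mem H m d hm hΓm hTd))
    (Nat.le_of_dvd hm hdm)
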